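/- (Theorem 3) For all real numbers s, t, u, v, one has φ(s,t;u,v) := ξ(s,t)·ξ(u,v) − [ξ((s+u)/2, (t+v)/2) − ξ((s+v)/2, (t+u)/2)]² ≥ 0, where ξ(s,t) := λ_s λ_t − (λ_{(s+t)/2})². -/

import Mathlib

open MeasureTheory
open Set
open scoped NNReal ENNReal

/-- The moment difference `λ_s(X)` of a positive random variable `X`. -/
noncomputable def momentLambda {Ω : Type*} [MeasurableSpace Ω] (μ : Measure Ω) (X : Ω → ℝ)
    (s : ℝ) : ℝ :=
  if s = 0 then Real.log (∫ ω, X ω ∂μ) - ∫ ω, Real.log (X ω) ∂μ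
  else if s = 1 then (∫ ω, X ω * Real.log (X ω) ∂μ) - (∫ ω, X ω ∂μ) * Real.log (∫ ω, X ω ∂μ)
  else ((∫ ω, X ω ^ s ∂μ) - (∫ ω, X ω ∂μ) ^ s) / (s * (s - 1))

/-- `ξ(s,t) := λ_s λ_t - (λ_{(s+t)/2})²`. -/
noncomputable def momentXi {Ω : Type*} [MeasurableSpace Ω] (μ : Measure Ω) (X : Ω → ℝ)
    (s t : ℝ) : ℝ :=
  momentLambda μ X s * momentLambda μ X t - (momentLambda μ X ((s + t) / 2)) ^ 2

lemma integral_cs {α : Type*} [MeasurableSpace α] (ρ : Measure α) (f g : α → ℝ)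
    (hf : Integrable (fun x => f x * f x) ρ) (hg : Integrable (fun x => g x * g x) ρ)
    (hfg : Integrable (fun x => f x * g x) ρ) :
    (∫ x, f x * g x ∂ρ) ^ 2 ≤ (∫ x, f x * f x ∂ρ) * ∫ x, g x * g x ∂ρ := by
  set A := ∫ x, f x * f x ∂ρ with hA
  set B := ∫ x, f x * g x ∂ρ with hB
  set C := ∫ x, g x * g x ∂ρ with hC
  have key : ∀ c : ℝ, 0 ≤ C * (c * c) + (-2 * B) * c + A := by
    intro c
    have e1 : Integrable (fun x => f x * f x - 2 * c * (f x * g x)) ρ := hf.sub (hfg.const_mul _)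
    have e2 : Integrable (fun x => c ^ 2 * (g x * g x)) ρ := hg.const_mul _
    have h2 : 0 ≤ ∫ x, (f x - c * g x) * (f x - c * g x) ∂ρ :=
      integral_nonneg fun x => mul_self_nonneg _
    have h3 : ∫ x, (f x - c * g x) * (f x - c * g x) ∂ρ = A - 2*c*B + c^2 * C := by
      have e0 : (fun x => (f x - c * g x) * (f x - c * g x))
          = fun x => (f x * f x - 2*c * (f x * g x)) + c^2 * (g x * g x) := by
        funext x; ring
      rw [e0, integral_add e1 e2, integral_sub hf (hfg.const_mul _), integral_const_mul,
        integral_const_mul]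

    rw [h3] at h2; nlinarith
  have := discrim_le_zero key
  rw [discrim] at this
  nlinarith

lemma main_ineq (ν : Measure ℝ) [SFinite ν] (hν : ∀ᵐ w ∂ν, 0 < w)
    (hint : ∀ r : ℝ, Integrable (fun w => w ^ r) ν) (s t u v : ℝ) :
    ((∫ w, w ^ s ∂ν) * (∫ w, w ^ t ∂ν) - (∫ w, w ^ ((s + t)/2) ∂ν) ^ 2) *
      ((∫ w, w ^ u ∂ν) * (∫ w, w ^ v ∂ν) - (∫ w, w ^ ((u + v)/2) ∂ν) ^ 2) -
      ((∫ w, w ^ ((s + u)/2) ∂ν) * (∫ w, w ^ ((t + v)/2) ∂ν) -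
        (∫ w, w ^ ((s + v)/2) ∂ν) * (∫ w, w ^ ((t + u)/2) ∂ν)) ^ 2 ≥ 0 := by
  set q : ℝ → ℝ → ℝ := fun b c => ∫ w, w ^ ((b + c)/2) ∂ν with hqdef
  have hq : ∀ b c : ℝ, Integrable (fun w => w ^ (b/2) * w ^ (c/2)) ν ∧
      (∫ w, w ^ (b/2) * w ^ (c/2) ∂ν) = q b c := by
    intro b c
    have hcong : (fun w : ℝ => w ^ ((b + c)/2)) =ᵐ[ν] fun w => w ^ (b/2) * w ^ (c/2) := by
      filter_upwards [hν] with w hw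
      have : (b + c)/2 = b/2 + c/2 := by ring
      rw [this, Real.rpow_add hw]
    exact ⟨(hint _).congr hcong, integral_congr_ae hcong.symm⟩
  have qsymm : ∀ b c : ℝ, q b c = q c b := by
    intro b c
    have : (b + c)/2 = (c + b)/2 := by ring
    simp only [hqdef, this]
  have hP : ∀ b b' c c' : ℝ,
      Integrable (fun z : ℝ × ℝ => (z.1 ^ (b/2) * z.1 ^ (b'/2)) * (z.2 ^ (c/2) * z.2 ^ (c'/2)))
        (ν.prod ν) ∧
      (∫ z : ℝ × ℝ, (z.1 ^ (b/2) * z.1 ^ (b'/2)) * (z.2 ^ (c/2) * z.2 ^ (c'/2)) ∂(ν.prod ν))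
        = q b b' * q c c' := by
    intro b b' c c'
    refine ⟨(hq b b').1.mul_prod (hq c c').1, ?_⟩
    rw [integral_prod_mul (fun w => w ^ (b/2) * w ^ (b'/2)) (fun w => w ^ (c/2) * w ^ (c'/2)),
      (hq b b').2, (hq c c').2]
  have hw : ∀ p1 p2 p3 p4 : ℝ,
      Integrable (fun z : ℝ × ℝ => (z.1 ^ (p1/2) * z.2 ^ (p2/2) - z.1 ^ (p2/2) * z.2 ^ (p1/2)) *
        (z.1 ^ (p3/2) * z.2 ^ (p4/2) - z.1 ^ (p4/2) * z.2 ^ (p3/2))) (ν.prod ν) ∧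
      (∫ z : ℝ × ℝ, (z.1 ^ (p1/2) * z.2 ^ (p2/2) - z.1 ^ (p2/2) * z.2 ^ (p1/2)) *
        (z.1 ^ (p3/2) * z.2 ^ (p4/2) - z.1 ^ (p4/2) * z.2 ^ (p3/2)) ∂(ν.prod ν))
        = 2 * (q p1 p3 * q p2 p4 - q p1 p4 * q p2 p3) := by
    intro p1 p2 p3 p4
    have e : (fun z : ℝ × ℝ => (z.1 ^ (p1/2) * z.2 ^ (p2/2) - z.1 ^ (p2/2) * z.2 ^ (p1/2)) *
        (z.1 ^ (p3/2) * z.2 ^ (p4/2) - z.1 ^ (p4/2) * z.2 ^ (p3/2)))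
        = fun z : ℝ × ℝ =>
          (((z.1 ^ (p1/2) * z.1 ^ (p3/2)) * (z.2 ^ (p2/2) * z.2 ^ (p4/2)) -
            (z.1 ^ (p1/2) * z.1 ^ (p4/2)) * (z.2 ^ (p2/2) * z.2 ^ (p3/2))) -
           ((z.1 ^ (p2/2) * z.1 ^ (p3/2)) * (z.2 ^ (p1/2) * z.2 ^ (p4/2)) -
            (z.1 ^ (p2/2) * z.1 ^ (p4/2)) * (z.2 ^ (p1/2) * z.2 ^ (p3/2)))) := by
      funext z; ring
    have i1 : Integrable (fun z : ℝ × ℝ =>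
        (z.1 ^ (p1/2) * z.1 ^ (p3/2)) * (z.2 ^ (p2/2) * z.2 ^ (p4/2)) -
        (z.1 ^ (p1/2) * z.1 ^ (p4/2)) * (z.2 ^ (p2/2) * z.2 ^ (p3/2))) (ν.prod ν) :=
      (hP p1 p3 p2 p4).1.sub (hP p1 p4 p2 p3).1
    have i2 : Integrable (fun z : ℝ × ℝ =>
        (z.1 ^ (p2/2) * z.1 ^ (p3/2)) * (z.2 ^ (p1/2) * z.2 ^ (p4/2)) -
        (z.1 ^ (p2/2) * z.1 ^ (p4/2)) * (z.2 ^ (p1/2) * z.2 ^ (p3/2))) (ν.prod ν) :=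
      (hP p2 p3 p1 p4).1.sub (hP p2 p4 p1 p3).1
    constructor
    · rw [e]
      exact i1.sub i2
    · rw [e, integral_sub i1 i2,
        integral_sub (hP p1 p3 p2 p4).1 (hP p1 p4 p2 p3).1,
        integral_sub (hP p2 p3 p1 p4).1 (hP p2 p4 p1 p3).1,
        (hP p1 p3 p2 p4).2, (hP p1 p4 p2 p3).2, (hP p2 p3 p1 p4).2, (hP p2 p4 p1 p3).2]
      ring
  have hIq : ∀ r : ℝ, (∫ w, w ^ r ∂ν) = q r r := by
    intro r
    show _ = ∫ w, w ^ ((r + r)/2) ∂ν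
    rw [show (r + r)/2 = r by ring]
  have cs := integral_cs (ν.prod ν)
    (fun z : ℝ × ℝ => z.1 ^ (s/2) * z.2 ^ (t/2) - z.1 ^ (t/2) * z.2 ^ (s/2))
    (fun z : ℝ × ℝ => z.1 ^ (u/2) * z.2 ^ (v/2) - z.1 ^ (v/2) * z.2 ^ (u/2))
    (hw s t s t).1 (hw u v u v).1 (hw s t u v).1
  rw [(hw s t s t).2, (hw u v u v).2, (hw s t u v).2] at cs
  rw [hIq s, hIq t, hIq u, hIq v]
  have e1 : (∫ w, w ^ ((s + t)/2) ∂ν) = q s t := rfl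
  have e2 : (∫ w, w ^ ((u + v)/2) ∂ν) = q u v := rfl
  have e3 : (∫ w, w ^ ((s + u)/2) ∂ν) = q s u := rfl
  have e4 : (∫ w, w ^ ((t + v)/2) ∂ν) = q t v := rfl
  have e5 : (∫ w, w ^ ((s + v)/2) ∂ν) = q s v := rfl
  have e6 : (∫ w, w ^ ((t + u)/2) ∂ν) = q t u := rfl
  rw [e1, e2, e3, e4, e5, e6]
  rw [qsymm t s, qsymm v u] at cs
  nlinarith [cs]

lemma momentLambda_rep {Ω : Type*} [MeasurableSpace Ω] (μ : Measure Ω) [IsProbabilityMeasure μ]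
    (X : Ω → ℝ) (hX : Measurable X) (hpos : ∀ᵐ ω ∂μ, 0 < X ω)
    (hmom : ∀ s : ℝ, Integrable (fun ω => X ω ^ s) μ)
    (hlog : Integrable (fun ω => Real.log (X ω)) μ)
    (hxlog : Integrable (fun ω => X ω * Real.log (X ω)) μ) :
    ∃ ν : Measure ℝ, SFinite ν ∧ (∀ᵐ w ∂ν, 0 < w) ∧
      (∀ r : ℝ, Integrable (fun w => w ^ r) ν) ∧
      ∀ r : ℝ, momentLambda μ X r = ∫ w, w ^ r ∂ν := by
  classical
  have hXint : Integrable X μ := by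
    have := hmom 1
    simpa [Real.rpow_one] using this
  set a := ∫ ω, X ω ∂μ with ha_def
  have ha : 0 < a := by
    rw [ha_def, integral_pos_iff_support_of_nonneg_ae (hpos.mono fun ω h => h.le) hXint]
    have hae : ∀ᵐ ω ∂μ, ω ∈ Function.support X := hpos.mono fun ω h => ne_of_gt h
    by_contra hcon
    rw [not_lt, le_zero_iff] at hcon
    have h2 : ∀ᵐ ω ∂μ, ω ∉ Function.support X := by
      rw [← MeasureTheory.measure_eq_zero_iff_ae_notMem] at *
      exact hcon
    obtain ⟨ω, h3, h4⟩ := (hae.and h2).exists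
    exact h4 h3
  set F : ℝ → ℝ → ℝ := fun w x =>
    max (x - w) 0 - max (a - w) 0 - (Set.Iic a).indicator (fun _ => (1:ℝ)) w * (x - a)
    with hFdef
  have hFm : Measurable (fun p : ℝ × ℝ => F p.1 p.2) := by
    apply Measurable.sub
    · exact ((measurable_snd.sub measurable_fst).max measurable_const).sub
        ((measurable_const.sub measurable_fst).max measurable_const)
    · exact ((measurable_const.indicator measurableSet_Iic).comp measurable_fst).mul
        (measurable_snd.sub measurable_const)
  have hF0 : ∀ w x : ℝ, w ∉ Set.uIoc a x → F w x = 0 := by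
    intro w x hw
    rcases le_or_gt w a with h1 | h1 <;> rcases le_or_gt w x with h2 | h2
    · show max (x - w) 0 - max (a - w) 0 - _ = 0
      rw [max_eq_left (sub_nonneg.mpr h2), max_eq_left (sub_nonneg.mpr h1),
        Set.indicator_of_mem (Set.mem_Iic.mpr h1)]
      ring
    · exact absurd (Set.mem_uIoc.mpr (Or.inr ⟨h2, h1⟩)) hw
    · exact absurd (Set.mem_uIoc.mpr (Or.inl ⟨h1, h2⟩)) hw
    · show max (x - w) 0 - max (a - w) 0 - _ = 0
      rw [max_eq_right (by linarith : x - w ≤ 0), max_eq_right (by linarith : a - w ≤ 0),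
        Set.indicator_of_notMem (by simpa using h1)]
      ring
  have hFval : ∀ w x : ℝ, w ∈ Set.uIoc a x → F w x = (if a ≤ x then 1 else -1) * (x - w) := by
    intro w x hw
    rcases Set.mem_uIoc.mp hw with ⟨h1, h2⟩ | ⟨h1, h2⟩
    · rw [if_pos (le_trans h1.le h2)]
      show max (x - w) 0 - max (a - w) 0 - _ = _
      rw [max_eq_left (sub_nonneg.mpr h2), max_eq_right (by linarith : a - w ≤ 0),
        Set.indicator_of_notMem (by simpa using h1)]
      ring
    · rw [if_neg (not_le.mpr (lt_of_lt_of_le h1 h2))]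
      show max (x - w) 0 - max (a - w) 0 - _ = _
      rw [max_eq_right (by linarith : x - w ≤ 0), max_eq_left (sub_nonneg.mpr h2),
        Set.indicator_of_mem (Set.mem_Iic.mpr h2)]
      ring
  have hFnn : ∀ w x : ℝ, 0 ≤ F w x := by
    intro w x
    by_cases hw : w ∈ Set.uIoc a x
    · rw [hFval w x hw]
      rcases Set.mem_uIoc.mp hw with ⟨h1, h2⟩ | ⟨h1, h2⟩
      · rw [if_pos (le_trans h1.le h2)]; nlinarith
      · rw [if_neg (not_le.mpr (lt_of_lt_of_le h1 h2))]; nlinarith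
    · rw [hF0 w x hw]
  set G : ℝ → ℝ := fun w => ∫ ω, F w (X ω) ∂μ with hGdef
  have hFint : ∀ w : ℝ, Integrable (fun ω => F w (X ω)) μ := by
    intro w
    show Integrable (fun ω => max (X ω - w) 0 - max (a - w) 0
      - (Set.Iic a).indicator (fun _ => (1:ℝ)) w * (X ω - a)) μ
    exact (((hXint.sub (integrable_const w)).sup (integrable_const 0)).sub
      (integrable_const _)).sub ((hXint.sub (integrable_const a)).const_mul _)
  have hGnn : ∀ w, 0 ≤ G w := fun w => integral_nonneg fun ω => hFnn w (X ω)
  have hGm : Measurable G := by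
    have h : StronglyMeasurable (fun p : ℝ × Ω => F p.1 (X p.2)) :=
      (hFm.comp (measurable_fst.prodMk (hX.comp measurable_snd))).stronglyMeasurable
    exact h.integral_prod_right'.measurable
  set W : Measure ℝ := volume.restrict (Set.Ioi 0) with hWdef
  have hIcont : ∀ (c x : ℝ), 0 < x → IntervalIntegrable (fun w => (x - w) * w ^ c) volume a x := by
    intro c x hx
    apply ContinuousOn.intervalIntegrable
    intro w hw
    have hw0 : 0 < w := lt_of_lt_of_le (lt_min ha hx) hw.1
    exact ((continuous_const.sub continuous_id).continuousWithinAt).mul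
      ((Real.continuousAt_rpow_const w c (Or.inl hw0.ne')).continuousWithinAt)
  have step1 : ∀ (c x : ℝ), 0 < x →
      IntegrableOn (fun w => w ^ c * F w x) (Set.Ioi 0) volume ∧
      ∫ w in Set.Ioi 0, w ^ c * F w x = ∫ w in a..x, (x - w) * w ^ c := by
    intro c x hx
    have hsub : Set.uIoc a x ⊆ Set.Ioi 0 := fun w hw => lt_trans (lt_min ha hx) hw.1
    have hind : (fun w => w ^ c * F w x) = (Set.uIoc a x).indicator (fun w => w ^ c * F w x) := by
      funext w
      by_cases hw : w ∈ Set.uIoc a x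
      · rw [Set.indicator_of_mem hw]
      · rw [Set.indicator_of_notMem hw, hF0 w x hw, mul_zero]
    have h1 : IntegrableOn (fun w => (if a ≤ x then 1 else -1) * ((x - w) * w ^ c))
        (Set.uIoc a x) volume := (intervalIntegrable_iff.mp (hIcont c x hx)).const_mul _
    have hIoc : IntegrableOn (fun w => w ^ c * F w x) (Set.uIoc a x) volume := by
      apply h1.congr_fun ?_ measurableSet_uIoc
      intro w hw
      show (if a ≤ x then (1:ℝ) else -1) * ((x - w) * w ^ c) = w ^ c * F w x
      rw [hFval w x hw]; ring
    have hfull : Integrable (fun w => w ^ c * F w x) W := by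
      rw [hWdef, hind]
      exact (hIoc.integrable_indicator measurableSet_uIoc).integrableOn
    refine ⟨hfull, ?_⟩
    calc ∫ w in Set.Ioi 0, w ^ c * F w x
        = ∫ w in Set.Ioi 0, (Set.uIoc a x).indicator (fun w => w ^ c * F w x) w := by
          rw [← hind]
      _ = ∫ w in Set.Ioi 0 ∩ Set.uIoc a x, w ^ c * F w x :=
          setIntegral_indicator measurableSet_uIoc
      _ = ∫ w in Set.uIoc a x, w ^ c * F w x := by rw [Set.inter_eq_right.mpr hsub]
      _ = ∫ w in Set.uIoc a x, (if a ≤ x then 1 else -1) * ((x - w) * w ^ c) := by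
          apply setIntegral_congr_fun measurableSet_uIoc
          intro w hw
          show w ^ c * F w x = (if a ≤ x then (1:ℝ) else -1) * ((x - w) * w ^ c)
          rw [hFval w x hw]; ring
      _ = (if a ≤ x then 1 else -1) * ∫ w in Set.uIoc a x, (x - w) * w ^ c :=
          integral_const_mul _ _
      _ = ∫ w in a..x, (x - w) * w ^ c := by
          rw [intervalIntegral.intervalIntegral_eq_integral_uIoc, smul_eq_mul]
  have step3 : ∀ (c : ℝ) (φ : ℝ → ℝ), (∀ x, 0 < x → ∫ w in a..x, (x - w) * w ^ c = φ x) →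
      Integrable (fun ω => φ (X ω)) μ →
      IntegrableOn (fun w => w ^ c * G w) (Set.Ioi 0) volume ∧
      ∫ ω, φ (X ω) ∂μ = ∫ w in Set.Ioi 0, w ^ c * G w := by
    intro c φ hφ hφint
    have hφnn : ∀ x, 0 < x → 0 ≤ φ x := by
      intro x hx
      rw [← hφ x hx, ← (step1 c x hx).2]
      exact setIntegral_nonneg measurableSet_Ioi fun w hw =>
        mul_nonneg (Real.rpow_nonneg (le_of_lt hw) c) (hFnn w x)
    have hmeas : Measurable (fun p : Ω × ℝ => ENNReal.ofReal (p.2 ^ c * F p.2 (X p.1))) :=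
      ENNReal.measurable_ofReal.comp ((measurable_snd.pow_const c).mul
        (hFm.comp (measurable_snd.prodMk (hX.comp measurable_fst))))
    have swap : ∫⁻ ω, ∫⁻ w, ENNReal.ofReal (w ^ c * F w (X ω)) ∂W ∂μ
        = ∫⁻ w, ∫⁻ ω, ENNReal.ofReal (w ^ c * F w (X ω)) ∂μ ∂W :=
      lintegral_lintegral_swap hmeas.aemeasurable
    have inner1 : ∀ᵐ ω ∂μ, ∫⁻ w, ENNReal.ofReal (w ^ c * F w (X ω)) ∂W
        = ENNReal.ofReal (φ (X ω)) := by
      filter_upwards [hpos] with ω hω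
      have hnn : 0 ≤ᵐ[W] fun w => w ^ c * F w (X ω) := by
        rw [hWdef]
        refine (ae_restrict_iff' measurableSet_Ioi).mpr (Filter.Eventually.of_forall ?_)
        intro w hw
        exact mul_nonneg (Real.rpow_nonneg (le_of_lt hw) c) (hFnn w (X ω))
      rw [← ofReal_integral_eq_lintegral_ofReal (step1 c (X ω) hω).1 hnn,
        (step1 c (X ω) hω).2, hφ _ hω]
    have lhs : ∫⁻ ω, ∫⁻ w, ENNReal.ofReal (w ^ c * F w (X ω)) ∂W ∂μ
        = ENNReal.ofReal (∫ ω, φ (X ω) ∂μ) := by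
      rw [lintegral_congr_ae inner1,
        ← ofReal_integral_eq_lintegral_ofReal hφint (hpos.mono fun ω h => hφnn _ h)]
    have inner2 : ∀ᵐ w ∂W, ∫⁻ ω, ENNReal.ofReal (w ^ c * F w (X ω)) ∂μ
        = ENNReal.ofReal (w ^ c * G w) := by
      rw [hWdef]
      filter_upwards [ae_restrict_mem measurableSet_Ioi] with w hw
      have h1 : (fun ω => ENNReal.ofReal (w ^ c * F w (X ω)))
          = fun ω => ENNReal.ofReal (w ^ c) * ENNReal.ofReal (F w (X ω)) := by
        funext ω
        exact ENNReal.ofReal_mul (Real.rpow_nonneg (le_of_lt hw) c)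
      have hmf : Measurable (fun ω => ENNReal.ofReal (F w (X ω))) :=
        ENNReal.measurable_ofReal.comp (hFm.comp (measurable_const.prodMk hX))
      rw [h1, lintegral_const_mul _ hmf,
        ← ofReal_integral_eq_lintegral_ofReal (hFint w)
          (Filter.Eventually.of_forall fun ω => hFnn w (X ω)),
        ← ENNReal.ofReal_mul (Real.rpow_nonneg (le_of_lt hw) c)]
    have main : ∫⁻ w, ENNReal.ofReal (w ^ c * G w) ∂W = ENNReal.ofReal (∫ ω, φ (X ω) ∂μ) := by
      rw [← lintegral_congr_ae inner2, ← swap, lhs]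
    have hWnn : 0 ≤ᵐ[W] fun w => w ^ c * G w := by
      rw [hWdef]
      refine (ae_restrict_iff' measurableSet_Ioi).mpr (Filter.Eventually.of_forall ?_)
      intro w hw
      exact mul_nonneg (Real.rpow_nonneg (le_of_lt hw) c) (hGnn w)
    have hmeasW : AEStronglyMeasurable (fun w => w ^ c * G w) W :=
      ((measurable_id.pow_const c).mul hGm).aestronglyMeasurable
    have hint2 : Integrable (fun w => w ^ c * G w) W := by
      refine ⟨hmeasW, ?_⟩
      rw [hasFiniteIntegral_iff_ofReal hWnn, main]
      exact ENNReal.ofReal_lt_top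
    refine ⟨hint2, ?_⟩
    rw [integral_eq_lintegral_of_nonneg_ae hWnn hmeasW, main,
      ENNReal.toReal_ofReal (integral_nonneg_of_ae (hpos.mono fun ω h => hφnn _ h))]
  have key : ∀ r : ℝ, IntegrableOn (fun w => w ^ (r - 2) * G w) (Set.Ioi 0) volume ∧
      momentLambda μ X r = ∫ w in Set.Ioi 0, w ^ (r - 2) * G w := by
    intro r
    by_cases hr0 : r = 0
    · subst hr0
      have hftc : ∀ x : ℝ, 0 < x → ∫ w in a..x, (x - w) * w ^ ((0:ℝ) - 2)
          = Real.log a - Real.log x + x * a⁻¹ - 1 := by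
        intro x hx
        have hderiv : ∀ w ∈ Set.uIcc a x, HasDerivAt (fun w => -x * w⁻¹ - Real.log w)
            ((x - w) * w ^ ((0:ℝ) - 2)) w := by
          intro w hw
          have hw0 : 0 < w := lt_of_lt_of_le (lt_min ha hx) hw.1
          have h1 := ((hasDerivAt_inv hw0.ne').const_mul (-x)).sub (Real.hasDerivAt_log hw0.ne')
          refine h1.congr_deriv (Eq.symm ?_)
          have hww : w ^ ((0:ℝ) - 2) = (w ^ 2)⁻¹ := by
            rw [show (0:ℝ) - 2 = -((2:ℕ):ℝ) by norm_num, Real.rpow_neg hw0.le, Real.rpow_natCast]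
          rw [hww]
          field_simp
        rw [intervalIntegral.integral_eq_sub_of_hasDerivAt hderiv (hIcont _ x hx)]
        field_simp
        ring
      have i1 : Integrable (fun ω => Real.log a - Real.log (X ω)) μ := (integrable_const _).sub hlog
      have i2 : Integrable (fun ω => X ω * a⁻¹) μ := hXint.mul_const _
      have i3 : Integrable (fun ω => Real.log a - Real.log (X ω) + X ω * a⁻¹) μ := i1.add i2
      have φint : Integrable (fun ω => Real.log a - Real.log (X ω) + X ω * a⁻¹ - 1) μ :=
        i3.sub (integrable_const _)
      obtain ⟨h1, h2⟩ := step3 ((0:ℝ) - 2) _ hftc φint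
      refine ⟨h1, ?_⟩
      rw [momentLambda, if_pos rfl, ← h2,
        integral_sub i3 (integrable_const (1:ℝ)),
        integral_add i1 i2,
        integral_sub (integrable_const _) hlog, integral_const, integral_const,
        integral_mul_const, ← ha_def]
      simp only [measure_univ, probReal_univ, smul_eq_mul, one_mul]
      rw [mul_inv_cancel₀ ha.ne']
      ring
    · by_cases hr1 : r = 1
      · subst hr1
        have hftc : ∀ x : ℝ, 0 < x → ∫ w in a..x, (x - w) * w ^ ((1:ℝ) - 2)
            = x * Real.log x - x * Real.log a - x + a := by
          intro x hx
          have hderiv : ∀ w ∈ Set.uIcc a x, HasDerivAt (fun w => x * Real.log w - w)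
              ((x - w) * w ^ ((1:ℝ) - 2)) w := by
            intro w hw
            have hw0 : 0 < w := lt_of_lt_of_le (lt_min ha hx) hw.1
            have h1 := ((Real.hasDerivAt_log hw0.ne').const_mul x).sub (hasDerivAt_id w)
            refine h1.congr_deriv (Eq.symm ?_)
            rw [show (1:ℝ) - 2 = -1 by norm_num, Real.rpow_neg_one]
            field_simp
          rw [intervalIntegral.integral_eq_sub_of_hasDerivAt hderiv (hIcont _ x hx)]
          ring
        have i1 : Integrable (fun ω => X ω * Real.log (X ω) - X ω * Real.log a) μ :=
          hxlog.sub (hXint.mul_const _)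
        have i2 : Integrable (fun ω => X ω * Real.log (X ω) - X ω * Real.log a - X ω) μ :=
          i1.sub hXint
        have φint : Integrable (fun ω => X ω * Real.log (X ω) - X ω * Real.log a - X ω + a) μ :=
          i2.add (integrable_const _)
        obtain ⟨h1, h2⟩ := step3 ((1:ℝ) - 2) _ hftc φint
        refine ⟨h1, ?_⟩
        rw [momentLambda, if_neg one_ne_zero, if_pos rfl, ← h2,
          integral_add i2 (integrable_const a),
          integral_sub i1 hXint,
          integral_sub hxlog (hXint.mul_const _), integral_const,
          integral_mul_const, ← ha_def]
        simp only [measure_univ, probReal_univ, smul_eq_mul, one_mul]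
        ring
      · have hftc : ∀ x : ℝ, 0 < x → ∫ w in a..x, (x - w) * w ^ (r - 2)
            = (x ^ r - a ^ r) / (r * (r - 1)) - a ^ (r - 1) * (x - a) / (r - 1) := by
          intro x hx
          have hr1' : r - 1 ≠ 0 := sub_ne_zero.mpr hr1
          have hderiv : ∀ w ∈ Set.uIcc a x,
              HasDerivAt (fun w => x * w ^ (r - 1) / (r - 1) - w ^ r / r)
              ((x - w) * w ^ (r - 2)) w := by
            intro w hw
            have hw0 : 0 < w := lt_of_lt_of_le (lt_min ha hx) hw.1
            have hD1 : HasDerivAt (fun w : ℝ => w ^ (r - 1)) ((r - 1) * w ^ (r - 1 - 1)) w :=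
              Real.hasDerivAt_rpow_const (Or.inl hw0.ne')
            have hD2 : HasDerivAt (fun w : ℝ => w ^ r) (r * w ^ (r - 1)) w :=
              Real.hasDerivAt_rpow_const (Or.inl hw0.ne')
            have h := ((hD1.const_mul x).div_const (r - 1)).sub (hD2.div_const r)
            refine h.congr_deriv (Eq.symm ?_)
            have e1 : r - 1 - 1 = r - 2 := by ring
            have e2 : w ^ (r - 1) = w ^ (r - 2) * w := by
              rw [show r - 1 = (r - 2) + 1 by ring, Real.rpow_add hw0, Real.rpow_one]
            rw [e1, e2]
            field_simp
          rw [intervalIntegral.integral_eq_sub_of_hasDerivAt hderiv (hIcont _ x hx)]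
          have hxr : x * x ^ (r - 1) = x ^ r := by
            have h := (Real.rpow_add hx 1 (r - 1)).symm
            rw [Real.rpow_one] at h
            rw [h, show (1:ℝ) + (r - 1) = r by ring]
          have har : a * a ^ (r - 1) = a ^ r := by
            have h := (Real.rpow_add ha 1 (r - 1)).symm
            rw [Real.rpow_one] at h
            rw [h, show (1:ℝ) + (r - 1) = r by ring]
          have hr1' : r - 1 ≠ 0 := sub_ne_zero.mpr hr1
          rw [← hxr, ← har]
          field_simp
          ring
        have i1 : Integrable (fun ω => X ω ^ r - a ^ r) μ := (hmom r).sub (integrable_const _)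
        have i2 : Integrable (fun ω => (X ω ^ r - a ^ r) / (r * (r - 1))) μ := i1.div_const _
        have i3 : Integrable (fun ω => X ω - a) μ := hXint.sub (integrable_const _)
        have i4 : Integrable (fun ω => a ^ (r - 1) * (X ω - a)) μ := i3.const_mul _
        have i5 : Integrable (fun ω => a ^ (r - 1) * (X ω - a) / (r - 1)) μ := i4.div_const _
        have φint : Integrable
            (fun ω => (X ω ^ r - a ^ r) / (r * (r - 1)) - a ^ (r - 1) * (X ω - a) / (r - 1)) μ :=
          i2.sub i5
        obtain ⟨h1, h2⟩ := step3 (r - 2) _ hftc φint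
        refine ⟨h1, ?_⟩
        rw [momentLambda, if_neg hr0, if_neg hr1, ← h2,
          integral_sub i2 i5,
          integral_div, integral_div,
          integral_sub (hmom r) (integrable_const _), integral_const,
          integral_const_mul, integral_sub hXint (integrable_const _), integral_const,
          ← ha_def]
        simp only [measure_univ, probReal_univ, smul_eq_mul, one_mul]
        ring
  set dens : ℝ → ℝ≥0 := fun w => Real.toNNReal (w ^ (-2:ℝ) * G w) with hdens
  have hdensm : Measurable dens := ((measurable_id.pow_const _).mul hGm).real_toNNReal
  refine ⟨W.withDensity (fun w => (dens w : ℝ≥0∞)), inferInstance, ?_, ?_, ?_⟩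
  · exact Filter.Eventually.filter_mono (withDensity_absolutelyContinuous W _).ae_le
      (ae_restrict_mem measurableSet_Ioi)
  · intro r
    have hd2 : Measurable (fun w => (dens w : ℝ≥0∞)) := measurable_coe_nnreal_ennreal.comp hdensm
    rw [integrable_withDensity_iff hd2
      (Filter.Eventually.of_forall fun w => ENNReal.coe_lt_top)]
    apply (key r).1.congr
    filter_upwards [ae_restrict_mem measurableSet_Ioi] with w hw
    have hw0 : (0:ℝ) < w := hw
    rw [ENNReal.coe_toReal, hdens, Real.coe_toNNReal _
      (mul_nonneg (Real.rpow_nonneg hw0.le _) (hGnn w))]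
    rw [show r - 2 = r + (-2) by ring, Real.rpow_add hw0]
    try simp only [smul_eq_mul]
    ring
  · intro r
    rw [(key r).2, integral_withDensity_eq_integral_smul hdensm (fun w => w ^ r)]
    apply integral_congr_ae
    filter_upwards [ae_restrict_mem measurableSet_Ioi] with w hw
    have hw0 : (0:ℝ) < w := hw
    rw [NNReal.smul_def, hdens, Real.coe_toNNReal _
      (mul_nonneg (Real.rpow_nonneg hw0.le _) (hGnn w))]
    rw [show r - 2 = r + (-2) by ring, Real.rpow_add hw0]
    try simp only [smul_eq_mul]
    ring

theorem theorem3 {Ω : Type*} [MeasurableSpace Ω] (μ : Measure Ω) [IsProbabilityMeasure μ]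
    (X : Ω → ℝ) (hX : Measurable X) (hpos : ∀ᵐ ω ∂μ, 0 < X ω)
    (hmom : ∀ s : ℝ, Integrable (fun ω => X ω ^ s) μ)
    (hlog : Integrable (fun ω => Real.log (X ω)) μ)
    (hxlog : Integrable (fun ω => X ω * Real.log (X ω)) μ)
    (s t u v : ℝ) :
    momentXi μ X s t * momentXi μ X u v -
      (momentXi μ X ((s + u) / 2) ((t + v) / 2) -
        momentXi μ X ((s + v) / 2) ((t + u) / 2)) ^ 2 ≥ 0 := by
  obtain ⟨ν, hS, hν, hint, hrep⟩ := momentLambda_rep μ X hX hpos hmom hlog hxlog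
  haveI : SFinite ν := hS
  simp only [momentXi, hrep]
  rw [show ((s + u) / 2 + (t + v) / 2) / 2 = ((s + v) / 2 + (t + u) / 2) / 2 by ring,
    sub_sub_sub_cancel_right]
  exact main_ineq ν hν hint s t u v
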